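/- Let A be the path algebra over k of the linear A_n quiver 1 → 2 → ⋯ → n with arrows α_i : i → (i+1). Fix a ∈ k and define Δ on the basis of paths by Δ(e_i) = a·(α_i⋯α_{n-1}) ⊗ (α_1⋯α_{i-1}) (with the conventions Δ(e_1) = a·(α_1⋯α_{n-1}) ⊗ e_1 and Δ(e_n) = a·e_n ⊗ (α_1⋯α_{n-1})), and Δ(α_i⋯α_j) = a·(α_i⋯α_{n-1}) ⊗ (α_1⋯α_j). Then Δ is a coassociative A-bimodule map, i.e., a nearly Frobenius coproduct on A. -/

import Mathlib

open TensorProduct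

/-- Let `A` be the path algebra of the linear quiver
`A_{n+1} : 0 → 1 → ⋯ → n`, presented by a basis `b (i,j)` (for `i ≤ j`) of paths from
vertex `i` to vertex `j`, with concatenation product and `1 = Σ_i b (i,i)`.  For any
`a ∈ k` the map `Δ(b (i,j)) = a • b (i, n) ⊗ b (0, j)` (i.e.
`Δ(α_i⋯α_j) = a·(α_i⋯α_{n-1}) ⊗ (α_1⋯α_j)` in the notation of the paper) is a
coassociative `A`-bimodule map, i.e. a nearly Frobenius coproduct on `A`. -/
theorem pathAlgebra_linearQuiver_nearlyFrobenius (k : Type*) [Field k] (n : ℕ)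
    (A : Type*) [Ring A] [Algebra k A]
    (b : Module.Basis {p : Fin (n + 1) × Fin (n + 1) // p.1 ≤ p.2} k A)
    (hmul : ∀ (i j i' j' : Fin (n + 1)) (h : i ≤ j) (h' : i' ≤ j'),
      b ⟨(i, j), h⟩ * b ⟨(i', j'), h'⟩ =
        if hj : j = i' then b ⟨(i, j'), h.trans (hj.trans_le h')⟩ else 0)
    (hone : (1 : A) = ∑ i : Fin (n + 1), b ⟨(i, i), le_refl i⟩)
    (a : k) :
    ∃ Δ : A →ₗ[k] A ⊗[k] A,
      (∀ (i j : Fin (n + 1)) (h : i ≤ j),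
        Δ (b ⟨(i, j), h⟩) =
          a • (b ⟨(i, Fin.last n), Fin.le_last i⟩ ⊗ₜ[k] b ⟨(0, j), Fin.zero_le j⟩)) ∧
      (∀ c x d : A, Δ (c * x * d) = (c ⊗ₜ[k] (1 : A)) * Δ x * ((1 : A) ⊗ₜ[k] d)) ∧
      (∀ x : A, (TensorProduct.assoc k A A A) (LinearMap.rTensor A Δ (Δ x)) =
          LinearMap.lTensor A Δ (Δ x)) := by
  classical
  set Δ : A →ₗ[k] A ⊗[k] A := b.constr k (fun p =>
    a • (b ⟨(p.1.1, Fin.last n), Fin.le_last _⟩ ⊗ₜ[k] b ⟨((0 : Fin (n+1)), p.1.2), Fin.zero_le _⟩))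
    with hΔdef
  have hΔ : ∀ (p : {p : Fin (n + 1) × Fin (n + 1) // p.1 ≤ p.2}),
      Δ (b p) = a • (b ⟨(p.1.1, Fin.last n), Fin.le_last _⟩ ⊗ₜ[k]
        b ⟨((0 : Fin (n+1)), p.1.2), Fin.zero_le _⟩) := fun p => b.constr_basis k _ p
  refine ⟨Δ, fun i j h => hΔ ⟨(i, j), h⟩, ?_, ?_⟩
  · -- bimodule property
    have key0 : ∀ (p q r : {p : Fin (n + 1) × Fin (n + 1) // p.1 ≤ p.2}),
        Δ (b p * b q * b r) = (b p ⊗ₜ[k] (1 : A)) * Δ (b q) * ((1 : A) ⊗ₜ[k] b r) := by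
      rintro ⟨⟨i, j⟩, h⟩ ⟨⟨i', j'⟩, h'⟩ ⟨⟨i'', j''⟩, h''⟩
      by_cases hji : j = i'
      · subst hji
        by_cases hj'i : j' = i''
        · subst hj'i
          simp [hmul, hΔ, smul_tmul', tmul_smul, Algebra.TensorProduct.tmul_mul_tmul,
            smul_mul_assoc, mul_smul_comm]
        · simp [hmul, hj'i, hΔ, smul_tmul', tmul_smul, Algebra.TensorProduct.tmul_mul_tmul,
            smul_mul_assoc, mul_smul_comm]
      · simp [hmul, hji, hΔ, smul_tmul', tmul_smul, Algebra.TensorProduct.tmul_mul_tmul,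
          smul_mul_assoc, mul_smul_comm]
    have key1 : ∀ (q r : {p : Fin (n + 1) × Fin (n + 1) // p.1 ≤ p.2}) (c : A),
        Δ (c * b q * b r) = (c ⊗ₜ[k] (1 : A)) * Δ (b q) * ((1 : A) ⊗ₜ[k] b r) := by
      intro q r c
      have hext : (Δ ∘ₗ LinearMap.mulRight k (b q * b r)) =
          (LinearMap.mulRight k ((1 : A) ⊗ₜ[k] b r)) ∘ₗ
            (LinearMap.mulRight k (Δ (b q))) ∘ₗ ((TensorProduct.mk k A A).flip (1 : A)) := by
        refine b.ext fun p => ?_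
        simpa [mul_assoc] using key0 p q r
      have := LinearMap.congr_fun hext c
      simpa [mul_assoc] using this
    have key2 : ∀ (q : {p : Fin (n + 1) × Fin (n + 1) // p.1 ≤ p.2}) (c d : A),
        Δ (c * b q * d) = (c ⊗ₜ[k] (1 : A)) * Δ (b q) * ((1 : A) ⊗ₜ[k] d) := by
      intro q c d
      have hext : (Δ ∘ₗ LinearMap.mulLeft k (c * b q)) =
          (LinearMap.mulLeft k ((c ⊗ₜ[k] (1 : A)) * Δ (b q))) ∘ₗ (TensorProduct.mk k A A (1 : A)) := by
        refine b.ext fun r => ?_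
        simpa [mul_assoc] using key1 q r c
      have := LinearMap.congr_fun hext d
      simpa [mul_assoc] using this
    intro c x d
    have hext : (Δ ∘ₗ LinearMap.mulRight k d ∘ₗ LinearMap.mulLeft k c) =
        (LinearMap.mulRight k ((1 : A) ⊗ₜ[k] d)) ∘ₗ
          (LinearMap.mulLeft k (c ⊗ₜ[k] (1 : A))) ∘ₗ Δ := by
      refine b.ext fun q => ?_
      simpa using key2 q c d
    have := LinearMap.congr_fun hext x
    simpa using this
  · -- coassociativity
    intro x
    have hext : ((TensorProduct.assoc k A A A).toLinearMap ∘ₗ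
          LinearMap.rTensor A Δ ∘ₗ Δ) = (LinearMap.lTensor A Δ ∘ₗ Δ) := by
      refine b.ext fun p => ?_
      simp only [LinearMap.coe_comp, LinearEquiv.coe_coe, Function.comp_apply, hΔ,
        map_smul, LinearMap.rTensor_tmul, LinearMap.lTensor_tmul,
        TensorProduct.assoc_tmul, ← smul_tmul', tmul_smul, smul_smul]
    exact LinearMap.congr_fun hext x
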